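/- arXiv:math/0412235 — 4 statements merged into one kernel-verified Lean document; each statement's English description precedes it below -/
import Mathlib

section
/- Let g ∈ ℂ[x₁,…,x_m] be weighted homogeneous of degree d with respect to weights α₁,…,α_m, let β ∈ ℕ^m, P = x^β, and fix an index i. Set dA_β := Σⱼ αⱼ(βⱼ+1). Then Σ_{j≠i} αⱼ·( (∂g/∂xⱼ)·(∂(xⱼP)/∂xᵢ) − (∂g/∂xᵢ)·(∂(xⱼP)/∂xⱼ) ) = d·g·(∂P/∂xᵢ) − (dA_β − αᵢ)·P·(∂g/∂xᵢ) as polynomials. -/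
open MvPolynomial

/-- Coefficient of a "scaled" polynomial `g(c₁x₁,…,c_mx_m)`. -/
lemma scale_coeff {m : ℕ} (c : Fin m → ℂ) (g : MvPolynomial (Fin m) ℂ) (s : Fin m →₀ ℕ) :
    coeff s (bind₁ (fun j => C (c j) * X j) g) = (∏ j, c j ^ s j) * coeff s g := by
  induction g using MvPolynomial.induction_on' with
  | add p q hp hq => simp [map_add, coeff_add, hp, hq, mul_add]
  | monomial u a =>
    rw [bind₁_monomial]
    have key : (C a : MvPolynomial (Fin m) ℂ) * ∏ j ∈ u.support, (C (c j) * X j) ^ u j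
        = monomial u (a * ∏ j ∈ u.support, c j ^ u j) := by
      rw [monomial_eq, Finsupp.prod]
      simp only [mul_pow, Finset.prod_mul_distrib, map_mul, map_prod, map_pow]
      ring
    rw [key, coeff_monomial, coeff_monomial]
    by_cases h : u = s
    · subst h
      rw [if_pos rfl, if_pos rfl]
      have : ∏ j ∈ u.support, c j ^ u j = ∏ j, c j ^ u j := by
        refine Finset.prod_subset (Finset.subset_univ _) (fun j _ hj => ?_)
        rw [Finsupp.notMem_support_iff.mp hj, pow_zero]
      rw [this]; ring
    · rw [if_neg h, if_neg h, mul_zero]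

/-- Every monomial in the support of a quasi-homogeneous polynomial has weighted
degree `d`. -/
lemma support_weight {m d : ℕ} (α : Fin m → ℕ) (g : MvPolynomial (Fin m) ℂ)
    (hg : ∀ (lam : ℂ) (x : Fin m → ℂ),
      eval (fun j => lam ^ (α j) * x j) g = lam ^ d * eval x g)
    {s : Fin m →₀ ℕ} (hs : s ∈ g.support) : ∑ j, α j * s j = d := by
  have key : ∀ lam : ℂ, bind₁ (fun j => C (lam ^ α j) * X j) g = C (lam ^ d) * g := by
    intro lam
    apply MvPolynomial.funext
    intro x
    have : eval x (bind₁ (fun j => C (lam ^ α j) * X j) g)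
        = eval (fun j => lam ^ α j * x j) g := by
      rw [show (eval x : MvPolynomial (Fin m) ℂ → ℂ) = ⇑(eval₂Hom (RingHom.id ℂ) x) from rfl,
        eval₂Hom_bind₁]
      simp
    rw [this, hg lam x]
    simp
  have hcoeff : ∀ lam : ℂ, lam ^ (∑ j, α j * s j) * coeff s g = lam ^ d * coeff s g := by
    intro lam
    have := congrArg (coeff s) (key lam)
    rw [scale_coeff] at this
    have hprod : (∏ j, (lam ^ α j) ^ s j) = lam ^ (∑ j, α j * s j) := by
      simp_rw [← pow_mul]
      exact Finset.prod_pow_eq_pow_sum _ _ _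
    rw [hprod] at this
    rw [coeff_C_mul] at this
    exact this
  have hne : coeff s g ≠ 0 := by simpa [MvPolynomial.mem_support_iff] using hs
  have h2 : (2 : ℂ) ^ (∑ j, α j * s j) = 2 ^ d :=
    mul_right_cancel₀ hne (hcoeff 2)
  have h2' : ((2 ^ (∑ j, α j * s j) : ℕ) : ℂ) = ((2 ^ d : ℕ) : ℂ) := by push_cast; exact h2
  exact Nat.pow_right_injective (le_refl 2) (Nat.cast_injective h2')

/-- The weighted Euler identity. -/
lemma euler {m d : ℕ} (α : Fin m → ℕ) (g : MvPolynomial (Fin m) ℂ)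
    (hg : ∀ (lam : ℂ) (x : Fin m → ℂ),
      eval (fun j => lam ^ (α j) * x j) g = lam ^ d * eval x g) :
    ∑ j, C ((α j : ℂ)) * (X j * pderiv j g) = C (d : ℂ) * g := by
  conv_lhs => rw [g.as_sum]
  conv_rhs => rw [g.as_sum]
  rw [Finset.mul_sum]
  simp_rw [map_sum, Finset.mul_sum]
  rw [Finset.sum_comm]
  refine Finset.sum_congr rfl (fun s hs => ?_)
  have hw : ∑ j, α j * s j = d := support_weight α g hg hs
  have hterm : ∀ j : Fin m, C ((α j : ℂ)) * (X j * pderiv j (monomial s (coeff s g)))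
      = monomial s (((α j : ℂ) * (s j : ℂ)) * coeff s g) := by
    intro j
    rw [pderiv_monomial]
    by_cases hj : s j = 0
    · simp [hj]
    · have hsub : s - Finsupp.single j 1 + Finsupp.single j 1 = s := by
        ext k
        by_cases hk : k = j
        · subst hk
          simp [Finsupp.single_apply, Nat.sub_add_cancel (Nat.one_le_iff_ne_zero.mpr hj)]
        · simp [Finsupp.single_apply, Ne.symm hk, hk]
      have : (X j : MvPolynomial (Fin m) ℂ) * monomial (s - Finsupp.single j 1) (coeff s g * s j)
          = monomial s (coeff s g * s j) := by
        rw [X, monomial_mul, one_mul, add_comm, hsub]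
      rw [this, C_mul_monomial]
      ring_nf
  simp_rw [hterm]
  rw [← map_sum (monomial s), C_mul_monomial, ← Finset.sum_mul]
  congr 1
  have : ∑ j, (α j : ℂ) * (s j : ℂ) = ((∑ j, α j * s j : ℕ) : ℂ) := by push_cast; rfl
  rw [this, hw]

/-- The key polynomial identity for the reduction algorithm in Brieskorn modules:
for `g` weighted homogeneous of degree `d` with weights `α`, `P = x^β` and an index `i`,
`Σ_{j≠i} αⱼ·((∂g/∂xⱼ)·(∂(xⱼP)/∂xᵢ) − (∂g/∂xᵢ)·(∂(xⱼP)/∂xⱼ))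
  = d·g·(∂P/∂xᵢ) − (dA_β − αᵢ)·P·(∂g/∂xᵢ)` where `dA_β = Σⱼ αⱼ(βⱼ+1)`. -/
theorem key_identity (m d : ℕ) (α : Fin m → ℕ) (hα : ∀ j, 0 < α j)
    (g : MvPolynomial (Fin m) ℂ)
    (hg : ∀ (lam : ℂ) (x : Fin m → ℂ),
      eval (fun j => lam ^ (α j) * x j) g = lam ^ d * eval x g)
    (β : Fin m → ℕ) (P : MvPolynomial (Fin m) ℂ) (hP : P = ∏ j, X j ^ β j)
    (i : Fin m) :
    ∑ j ∈ Finset.univ \ {i}, C ((α j : ℂ)) *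
        (pderiv j g * pderiv i (X j * P) - pderiv i g * pderiv j (X j * P)) =
      C (d : ℂ) * g * pderiv i P -
        C ((∑ j, (α j : ℂ) * ((β j : ℂ) + 1)) - (α i : ℂ)) * P * pderiv i g := by
  -- P as a monomial
  set σβ : Fin m →₀ ℕ := Finsupp.equivFunOnFinite.symm β with hσβ
  have hσβ_apply : ∀ j, σβ j = β j := fun j => rfl
  have hPm : P = monomial σβ 1 := by
    rw [hP, ← prod_X_pow_eq_monomial]
    have e1 : (∏ x ∈ σβ.support, X x ^ σβ x : MvPolynomial (Fin m) ℂ)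
        = ∏ x ∈ σβ.support, X x ^ β x :=
      Finset.prod_congr rfl (fun j _ => by rw [hσβ_apply])
    have e2 : (∏ x : Fin m, X x ^ β x : MvPolynomial (Fin m) ℂ)
        = ∏ x ∈ σβ.support, X x ^ β x := by
      refine (Finset.prod_subset (Finset.subset_univ _) (fun j _ hj => ?_)).symm
      have : β j = 0 := by
        have := Finsupp.notMem_support_iff.mp hj
        rwa [hσβ_apply] at this
      rw [this, pow_zero]
    rw [e1, e2]
  -- the crucial monomial identity: X j * ∂ⱼ P = βⱼ • P
  have h1 : ∀ j, X j * pderiv j P = C ((β j : ℂ)) * P := by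
    intro j
    rw [hPm, pderiv_monomial, hσβ_apply, C_mul_monomial, one_mul, mul_one]
    by_cases hj : β j = 0
    · simp [hj]
    · have hsub : σβ - Finsupp.single j 1 + Finsupp.single j 1 = σβ := by
        ext k
        by_cases hk : k = j
        · subst hk
          simp [Finsupp.single_apply, hσβ_apply,
            Nat.sub_add_cancel (Nat.one_le_iff_ne_zero.mpr hj)]
        · simp [Finsupp.single_apply, Ne.symm hk, hk]
      rw [X, monomial_mul, one_mul, add_comm, hsub]
  have hEuler := euler α g hg
  -- rewrite each summand
  have hsummand : ∀ j ∈ Finset.univ \ ({i} : Finset (Fin m)),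
      C ((α j : ℂ)) * (pderiv j g * pderiv i (X j * P) - pderiv i g * pderiv j (X j * P))
        = C ((α j : ℂ)) * (X j * pderiv j g) * pderiv i P
            - C ((α j : ℂ) * ((β j : ℂ) + 1)) * (P * pderiv i g) := by
    intro j hj
    have hji : j ≠ i := by
      simpa [Finset.mem_sdiff] using hj
    have e1 : pderiv i (X j * P) = X j * pderiv i P := by
      rw [pderiv_mul, pderiv_X_of_ne hji, zero_mul, zero_add]
    have e2 : pderiv j (X j * P) = P + C ((β j : ℂ)) * P := by
      rw [pderiv_mul, pderiv_X_self, one_mul, h1 j]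
    rw [e1, e2, map_mul, map_add, map_one]
    ring
  rw [Finset.sum_congr rfl hsummand, Finset.sum_sub_distrib]
  have hsubset : ({i} : Finset (Fin m)) ⊆ Finset.univ := Finset.subset_univ _
  rw [Finset.sum_sdiff_eq_sub hsubset, Finset.sum_sdiff_eq_sub hsubset,
    Finset.sum_singleton, Finset.sum_singleton, ← Finset.sum_mul, hEuler,
    ← Finset.sum_mul]
  have hCsum : (∑ j, C ((α j : ℂ) * ((β j : ℂ) + 1)) : MvPolynomial (Fin m) ℂ)
      = C (∑ j, (α j : ℂ) * ((β j : ℂ) + 1)) := (map_sum C _ _).symm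
  rw [hCsum, map_sub, map_mul, map_add, map_one]
  have hXg : C ((α i : ℂ)) * (X i * pderiv i g) * pderiv i P
      = C ((α i : ℂ)) * C ((β i : ℂ)) * P * pderiv i g := by
    have : X i * pderiv i g * pderiv i P = pderiv i g * (X i * pderiv i P) := by ring
    rw [mul_assoc, this, h1 i]
    ring
  rw [hXg]
  ring
end

section
/- Let f ∈ ℂ[x₁,…,x_m] have finite-dimensional Milnor algebra V = ℂ[x]/J where J is the Jacobian ideal. A complex number c is an eigenvalue of the multiplication-by-f endomorphism A_f : V → V if and only if c is a critical value of f, i.e. there exists a point p ∈ ℂ^m with ∂f/∂xᵢ(p) = 0 for all i and f(p) = c. -/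
open MvPolynomial

/-- `c` is an eigenvalue of the multiplication-by-`f` endomorphism of the Milnor
algebra `V = ℂ[x]/J` iff `c` is a critical value of `f`. -/
theorem eigenvalue_iff_critical_value (m : ℕ) (f : MvPolynomial (Fin m) ℂ)
    (J : Ideal (MvPolynomial (Fin m) ℂ))
    (hJ : J = Ideal.span (Set.range fun i => pderiv i f))
    [FiniteDimensional ℂ (MvPolynomial (Fin m) ℂ ⧸ J)] (c : ℂ) :
    Module.End.HasEigenvalue
        (LinearMap.mulLeft ℂ (Ideal.Quotient.mk J f) :
          Module.End ℂ (MvPolynomial (Fin m) ℂ ⧸ J)) c ↔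
      ∃ p : Fin m → ℂ, (∀ i, eval p (pderiv i f) = 0) ∧ eval p f = c := by
  set g : MvPolynomial (Fin m) ℂ := f - C c with hg
  set u : MvPolynomial (Fin m) ℂ ⧸ J := Ideal.Quotient.mk J g with hu
  -- Step 1: eigenvalue iff `u` is not a unit.
  have hCc : (Ideal.Quotient.mk J (C c : MvPolynomial (Fin m) ℂ)) = algebraMap ℂ (MvPolynomial (Fin m) ℂ ⧸ J) c := by
    rw [show (C c : MvPolynomial (Fin m) ℂ) = algebraMap ℂ (MvPolynomial (Fin m) ℂ) c from rfl]
    exact (Ideal.Quotient.mkₐ ℂ J).commutes c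
  have key : ∀ v : MvPolynomial (Fin m) ℂ ⧸ J, u * v = (Ideal.Quotient.mk J f) * v - c • v := by
    intro v
    rw [hu, hg, map_sub, sub_mul, hCc]
    congr 1
    exact (Algebra.smul_def c v).symm
  have step1 : Module.End.HasEigenvalue
      (LinearMap.mulLeft ℂ (Ideal.Quotient.mk J f) : Module.End ℂ (MvPolynomial (Fin m) ℂ ⧸ J)) c ↔ ¬ IsUnit u := by
    rw [Module.End.hasEigenvalue_iff, Submodule.ne_bot_iff]
    constructor
    · rintro ⟨v, hv, hv0⟩ hunit
      rw [Module.End.mem_eigenspace_iff, LinearMap.mulLeft_apply] at hv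
      have huv : u * v = 0 := by rw [key, hv, sub_self]
      obtain ⟨w, hw⟩ := hunit
      apply hv0
      calc v = (↑w⁻¹ * w) * v := by rw [Units.inv_mul, one_mul]
        _ = ↑w⁻¹ * (u * v) := by rw [mul_assoc, hw]
        _ = 0 := by rw [huv, mul_zero]
    · intro hnu
      by_contra hker
      push_neg at hker
      have hinj : Function.Injective (LinearMap.mulLeft ℂ u) := by
        rw [← LinearMap.ker_eq_bot, Submodule.eq_bot_iff]
        intro v hv
        rw [LinearMap.mem_ker, LinearMap.mulLeft_apply, key, sub_eq_zero] at hv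
        by_contra hv0
        exact hv0 (hker v (Module.End.mem_eigenspace_iff.mpr hv))
      have hsurj := (LinearMap.injective_iff_surjective
        (f := LinearMap.mulLeft ℂ u)).mp hinj
      obtain ⟨y, hy⟩ := hsurj 1
      rw [LinearMap.mulLeft_apply] at hy
      exact hnu (IsUnit.of_mul_eq_one (a := u) y hy)
  rw [step1]
  constructor
  · -- non-unit → critical point
    intro hnu
    obtain ⟨M', hM', huM'⟩ := exists_max_ideal_of_mem_nonunits hnu
    have hsurj : Function.Surjective (Ideal.Quotient.mk J) := Ideal.Quotient.mk_surjective
    set M : Ideal (MvPolynomial (Fin m) ℂ) := M'.comap (Ideal.Quotient.mk J) with hM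
    have hMmax : M.IsMaximal := Ideal.comap_isMaximal_of_surjective _ hsurj
    obtain ⟨p, hp⟩ := (MvPolynomial.isMaximal_iff_eq_vanishingIdeal_singleton (I := M)).mp hMmax
    have hJM : J ≤ M := by
      intro x hx
      simp only [hM, Ideal.mem_comap, Ideal.Quotient.eq_zero_iff_mem.mpr hx,
        Submodule.zero_mem]
    refine ⟨p, fun i => ?_, ?_⟩
    · have : pderiv i f ∈ J := by
        rw [hJ]; exact Ideal.subset_span ⟨i, rfl⟩
      have := hJM this
      rwa [hp, MvPolynomial.mem_vanishingIdeal_singleton_iff, aeval_eq_eval] at this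
    · have hgM : g ∈ M := huM'
      rw [hp, MvPolynomial.mem_vanishingIdeal_singleton_iff, aeval_eq_eval, hg, map_sub, eval_C,
        sub_eq_zero] at hgM
      exact hgM
  · -- critical point → non-unit
    rintro ⟨p, hpd, hpf⟩ hunit
    set M : Ideal (MvPolynomial (Fin m) ℂ) := MvPolynomial.vanishingIdeal ℂ {p} with hM
    have hJM : J ≤ M := by
      rw [hJ, Ideal.span_le]
      rintro _ ⟨i, rfl⟩
      rw [SetLike.mem_coe, hM, MvPolynomial.mem_vanishingIdeal_singleton_iff, aeval_eq_eval]
      exact hpd i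
    have hgM : g ∈ M := by
      rw [hM, MvPolynomial.mem_vanishingIdeal_singleton_iff, aeval_eq_eval, hg, map_sub, eval_C,
        sub_eq_zero]
      exact hpf
    obtain ⟨w, hw⟩ := hunit.exists_right_inv
    obtain ⟨h, rfl⟩ := Ideal.Quotient.mk_surjective w
    rw [hu, ← map_mul, ← map_one (Ideal.Quotient.mk J), Ideal.Quotient.mk_eq_mk_iff_sub_mem]
      at hw
    have h1M : (1 : MvPolynomial (Fin m) ℂ) ∈ M := by
      have : g * h - 1 ∈ M := hJM hw
      have hgh : g * h ∈ M := Ideal.mul_mem_right _ _ hgM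
      have := M.sub_mem hgh this
      simpa using this
    exact (inferInstance : (MvPolynomial.vanishingIdeal ℂ {p} : Ideal (MvPolynomial (Fin m) ℂ)).IsMaximal).ne_top
      (Ideal.eq_top_iff_one M |>.mpr h1M)
end

section
/- Let g ∈ ℂ[x₁,…,x_{n+1}] be a polynomial with finite-dimensional Milnor algebra of dimension μ, let d ≥ 2 and c ∈ ℂ with c ≠ 0. Then the polynomial G = g − c·x₀^d ∈ ℂ[x₀,x₁,…,x_{n+1}] has finite-dimensional Milnor algebra of dimension μ·(d−1). -/
open MvPolynomial

private theorem aux_adjoinRoot_pow (S : Type) [CommRing S] [Algebra ℂ S]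
    [FiniteDimensional ℂ S] (m : ℕ) :
    FiniteDimensional ℂ (AdjoinRoot (Polynomial.X ^ m : Polynomial S)) ∧
    Module.finrank ℂ (AdjoinRoot (Polynomial.X ^ m : Polynomial S))
      = Module.finrank ℂ S * m := by
  have hm : (Polynomial.X ^ m : Polynomial S).Monic := Polynomial.monic_X_pow _
  let pb := AdjoinRoot.powerBasis' hm
  let bS := Module.finBasis ℂ S
  let b : Module.Basis _ ℂ (AdjoinRoot (Polynomial.X ^ m : Polynomial S)) := bS.smulTower pb.basis
  haveI : FiniteDimensional ℂ (AdjoinRoot (Polynomial.X ^ m : Polynomial S)) :=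
    Module.Finite.of_basis b
  refine ⟨inferInstance, ?_⟩
  rcases subsingleton_or_nontrivial S with hS | hS
  · haveI : Subsingleton (AdjoinRoot (Polynomial.X ^ m : Polynomial S)) := by
      exact Ideal.Quotient.mk_surjective.subsingleton
    rw [Module.finrank_zero_of_subsingleton, Module.finrank_zero_of_subsingleton, zero_mul]
  · rw [Module.finrank_eq_card_basis b, Fintype.card_prod, Fintype.card_fin, Fintype.card_fin]
    congr 1
    exact Polynomial.natDegree_X_pow m

/-- If `g` has finite dimensional Milnor algebra of dimension `μ`, `d ≥ 2` and `c ≠ 0`,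
then `G = g − c·x₀^d` has finite dimensional Milnor algebra of dimension `μ·(d−1)`.
Here `x₀` is the variable indexed by `none`. -/
theorem milnor_number_of_cone (n d : ℕ) (hd : 2 ≤ d) (c : ℂ) (hc : c ≠ 0)
    (g : MvPolynomial (Fin (n + 1)) ℂ)
    (Jg : Ideal (MvPolynomial (Fin (n + 1)) ℂ))
    (hJg : Jg = Ideal.span (Set.range fun i => pderiv i g))
    [FiniteDimensional ℂ (MvPolynomial (Fin (n + 1)) ℂ ⧸ Jg)]
    (G : MvPolynomial (Option (Fin (n + 1))) ℂ)
    (hG : G = rename some g - C c * X none ^ d)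
    (JG : Ideal (MvPolynomial (Option (Fin (n + 1))) ℂ))
    (hJG : JG = Ideal.span (Set.range fun j => pderiv j G)) :
    FiniteDimensional ℂ (MvPolynomial (Option (Fin (n + 1))) ℂ ⧸ JG) ∧
      Module.finrank ℂ (MvPolynomial (Option (Fin (n + 1))) ℂ ⧸ JG) =
        Module.finrank ℂ (MvPolynomial (Fin (n + 1)) ℂ ⧸ Jg) * (d - 1) := by
  classical
  set f : Polynomial (MvPolynomial (Fin (n + 1)) ℂ ⧸ Jg) := Polynomial.X ^ (d - 1) with hf
  -- derivative computations
  have h1 : ∀ i : Fin (n + 1), pderiv (some i) G = rename some (pderiv i g) := by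
    intro i
    rw [hG, map_sub, pderiv_rename (Option.some_injective _)]
    have h2 : pderiv (some i) (C c * X none ^ d : MvPolynomial (Option (Fin (n+1))) ℂ) = 0 := by
      rw [pderiv_C_mul, Derivation.leibniz_pow,
        pderiv_X_of_ne (by simp : (none : Option (Fin (n+1))) ≠ some i)]
      simp
    rw [h2, sub_zero]
  have h0 : pderiv (none : Option (Fin (n+1))) G
      = MvPolynomial.C (-(c * (d : ℂ))) * X none ^ (d - 1) := by
    have hv : pderiv (none : Option (Fin (n+1))) (rename some g) = 0 := by
      apply pderiv_eq_zero_of_notMem_vars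
      intro hmem
      have := vars_rename some g hmem
      simp at this
    rw [hG, map_sub, hv, zero_sub, pderiv_C_mul, Derivation.leibniz_pow, pderiv_X_self]
    simp only [nsmul_eq_mul, smul_eq_mul, mul_one, map_neg, map_mul, map_natCast]
    ring
  -- membership facts
  have hdc : (-(c * (d : ℂ))) ≠ 0 := by
    have : (d : ℂ) ≠ 0 := Nat.cast_ne_zero.2 (by omega)
    simp [hc, this]
  have hXmem : (X none : MvPolynomial (Option (Fin (n+1))) ℂ) ^ (d - 1) ∈ JG := by
    have hmem : pderiv (none : Option (Fin (n+1))) G ∈ JG := by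
      rw [hJG]
      exact Ideal.subset_span ⟨none, rfl⟩
    have heq : (X none : MvPolynomial (Option (Fin (n+1))) ℂ) ^ (d - 1)
        = MvPolynomial.C (-(c * (d : ℂ)))⁻¹ * pderiv (none : Option (Fin (n+1))) G := by
      rw [h0, ← mul_assoc, ← map_mul, inv_mul_cancel₀ hdc, map_one, one_mul]
    rw [heq]
    exact Ideal.mul_mem_left _ _ hmem
  have hrenmem : ∀ p ∈ Jg, rename (some : Fin (n+1) → Option (Fin (n+1))) p ∈ JG := by
    intro p hp
    have hmap : Ideal.map (rename (some : Fin (n+1) → Option (Fin (n+1)))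
          : MvPolynomial (Fin (n+1)) ℂ →ₐ[ℂ] MvPolynomial (Option (Fin (n+1))) ℂ).toRingHom Jg
        ≤ JG := by
      rw [hJg, Ideal.map_span, Ideal.span_le]
      rintro _ ⟨_, ⟨i, rfl⟩, rfl⟩
      rw [hJG]
      exact Ideal.subset_span ⟨some i, by simpa using h1 i⟩
    exact hmap (Ideal.mem_map_of_mem _ hp)
  -- the ring homomorphisms
  have hroot : (AdjoinRoot.root f) ^ (d - 1) = 0 := by
    rw [← AdjoinRoot.mk_X, ← map_pow, ← hf, AdjoinRoot.mk_self]
  let σ₀ : (MvPolynomial (Fin (n+1)) ℂ ⧸ Jg) →+* MvPolynomial (Option (Fin (n+1))) ℂ ⧸ JG :=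
    Ideal.Quotient.lift Jg ((Ideal.Quotient.mk JG).comp
      (rename (some : Fin (n+1) → Option (Fin (n+1)))
        : MvPolynomial (Fin (n+1)) ℂ →ₐ[ℂ] MvPolynomial (Option (Fin (n+1))) ℂ).toRingHom)
      (fun p hp => Ideal.Quotient.eq_zero_iff_mem.2 (hrenmem p hp))
  have hσ₀ : ∀ p : MvPolynomial (Fin (n+1)) ℂ,
      σ₀ (Ideal.Quotient.mk Jg p) = Ideal.Quotient.mk JG (rename some p) :=
    fun p => rfl
  let ψ : AdjoinRoot f →+* MvPolynomial (Option (Fin (n+1))) ℂ ⧸ JG :=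
    AdjoinRoot.lift σ₀ (Ideal.Quotient.mk JG (X none)) (by
      rw [hf, Polynomial.eval₂_X_pow, ← map_pow, Ideal.Quotient.eq_zero_iff_mem]
      exact hXmem)
  let χ : ℂ →+* AdjoinRoot f :=
    (AdjoinRoot.of f).comp ((Ideal.Quotient.mk Jg).comp (MvPolynomial.C))
  let v : Option (Fin (n + 1)) → AdjoinRoot f := fun j =>
    j.elim (AdjoinRoot.root f) (fun i => AdjoinRoot.of f (Ideal.Quotient.mk Jg (X i)))
  let φr : MvPolynomial (Option (Fin (n+1))) ℂ →+* AdjoinRoot f := eval₂Hom χ v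
  have hφren : ∀ q : MvPolynomial (Fin (n+1)) ℂ,
      φr (rename some q) = AdjoinRoot.of f (Ideal.Quotient.mk Jg q) := by
    have hcomp : φr.comp (rename (some : Fin (n+1) → Option (Fin (n+1)))
          : MvPolynomial (Fin (n+1)) ℂ →ₐ[ℂ] MvPolynomial (Option (Fin (n+1))) ℂ).toRingHom
        = (AdjoinRoot.of f).comp (Ideal.Quotient.mk Jg) := by
      apply MvPolynomial.ringHom_ext
      · intro a; simp [φr, χ, v]
      · intro i; simp [φr, χ, v]
    exact fun q => RingHom.congr_fun hcomp q
  have hker : ∀ p ∈ JG, φr p = 0 := by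
    rw [hJG]
    intro p hp
    refine Submodule.span_induction ?_ (map_zero _) (fun x y _ _ hx hy => by
      rw [map_add, hx, hy, add_zero]) (fun a x _ hx => by
      rw [smul_eq_mul, map_mul, hx, mul_zero]) hp
    rintro _ ⟨j, rfl⟩
    show φr (pderiv j G) = 0
    cases j with
    | none =>
        rw [h0, map_mul, map_pow]
        have hx : φr (X (none : Option (Fin (n+1)))) = AdjoinRoot.root f := by simp [φr, v]
        rw [hx, hroot, mul_zero]
    | some i =>
        rw [h1 i, hφren]
        have hz : Ideal.Quotient.mk Jg (pderiv i g) = 0 :=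
          Ideal.Quotient.eq_zero_iff_mem.2 (by rw [hJg]; exact Ideal.subset_span ⟨i, rfl⟩)
        rw [hz, map_zero]
  let φ' : (MvPolynomial (Option (Fin (n+1))) ℂ ⧸ JG) →+* AdjoinRoot f :=
    Ideal.Quotient.lift JG φr hker
  -- mutual inverses
  have hψroot : ψ (AdjoinRoot.root f) = Ideal.Quotient.mk JG (X none) := AdjoinRoot.lift_root _
  have hψof : ∀ s : MvPolynomial (Fin (n+1)) ℂ ⧸ Jg,
      ψ (AdjoinRoot.of f s) = σ₀ s := fun s => AdjoinRoot.lift_of _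
  have h₁ : φ'.comp ψ = RingHom.id (AdjoinRoot f) := by
    rw [← RingHom.cancel_right (AdjoinRoot.mk_surjective (g := f))]
    apply Polynomial.ringHom_ext
    · intro s
      obtain ⟨p, rfl⟩ := Ideal.Quotient.mk_surjective s
      · have hmkC : (AdjoinRoot.mk f) (Polynomial.C (Ideal.Quotient.mk Jg p))
            = AdjoinRoot.of f (Ideal.Quotient.mk Jg p) := rfl
        simp only [RingHom.comp_apply, hmkC, hψof, hσ₀]
        show φr (rename some p) = _
        rw [hφren]
        rfl
    · have hmkX : (AdjoinRoot.mk f) Polynomial.X = AdjoinRoot.root f := rfl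
      simp only [RingHom.comp_apply, hmkX, hψroot]
      show φr (X none) = AdjoinRoot.root f
      simp [φr, v]
  have h₂ : ψ.comp φ' = RingHom.id (MvPolynomial (Option (Fin (n+1))) ℂ ⧸ JG) := by
    rw [← RingHom.cancel_right (Ideal.Quotient.mk_surjective (I := JG))]
    apply MvPolynomial.ringHom_ext
    · intro a
      show ψ (φr (MvPolynomial.C a)) = Ideal.Quotient.mk JG (MvPolynomial.C a)
      have hca : φr (MvPolynomial.C a)
          = AdjoinRoot.of f (Ideal.Quotient.mk Jg (MvPolynomial.C a)) := by
        simp [φr, χ]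
      rw [hca, hψof, hσ₀, rename_C]
    · intro j
      show ψ (φr (X j)) = Ideal.Quotient.mk JG (X j)
      cases j with
      | none =>
          have hx : φr (X (none : Option (Fin (n+1)))) = AdjoinRoot.root f := by simp [φr, v]
          rw [hx, hψroot]
      | some i =>
          have hx : φr (X (some i)) = AdjoinRoot.of f (Ideal.Quotient.mk Jg (X i)) := by
            simp [φr, v]
          rw [hx, hψof, hσ₀, rename_X]
  let e : (MvPolynomial (Option (Fin (n+1))) ℂ ⧸ JG) ≃+* AdjoinRoot f :=
    RingEquiv.ofRingHom φ' ψ h₁ h₂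
  have halg : ∀ a : ℂ,
      e (algebraMap ℂ (MvPolynomial (Option (Fin (n+1))) ℂ ⧸ JG) a)
        = algebraMap ℂ (AdjoinRoot f) a := by
    intro a
    have h3 : (algebraMap ℂ (MvPolynomial (Option (Fin (n+1))) ℂ ⧸ JG)) a
        = Ideal.Quotient.mk JG (MvPolynomial.C a) := by
      rw [← Ideal.Quotient.mk_algebraMap, MvPolynomial.algebraMap_eq]
    have h4 : (algebraMap ℂ (MvPolynomial (Fin (n+1)) ℂ ⧸ Jg)) a
        = Ideal.Quotient.mk Jg (MvPolynomial.C a) := by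
      rw [← Ideal.Quotient.mk_algebraMap, MvPolynomial.algebraMap_eq]
    rw [h3, AdjoinRoot.algebraMap_eq', RingHom.comp_apply, h4]
    show φr (MvPolynomial.C a) = _
    simp [φr, χ]
  let eA : (MvPolynomial (Option (Fin (n+1))) ℂ ⧸ JG) ≃ₐ[ℂ] AdjoinRoot f :=
    AlgEquiv.ofRingEquiv halg
  obtain ⟨hfd, hrank⟩ := aux_adjoinRoot_pow (MvPolynomial (Fin (n+1)) ℂ ⧸ Jg) (d - 1)
  haveI : FiniteDimensional ℂ (AdjoinRoot f) := hfd
  constructor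
  · exact Module.Finite.equiv eA.toLinearEquiv.symm
  · rw [eA.toLinearEquiv.finrank_eq]
    exact hrank
end

section
/- Let f ∈ ℂ[x] be a polynomial of degree d ≥ 2 in one variable with derivative f'. Then ℂ[x] decomposes as the direct sum of ℂ[f]-modules ℂ[x] = ℂ[f]·1 ⊕ ℂ[f]·x ⊕ ⋯ ⊕ ℂ[f]·x^{d−2} ⊕ f'·ℂ[f]. In particular every p ∈ ℂ[x] can be written uniquely as p = Σ_{i=0}^{d−2} q_i(f)·x^i + q(f)·f' with q_i, q ∈ ℂ[t]. -/
open Polynomial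

/-- The basis family: `X^i` for `i < m`, and `f'` for `i = m`. -/
noncomputable def bb (f : Polynomial ℂ) (m : ℕ) (i : Fin (m + 1)) : Polynomial ℂ :=
  if (i : ℕ) < m then X ^ (i : ℕ) else derivative f

lemma deriv_natDegree {f : Polynomial ℂ} {m : ℕ} (hdeg : f.natDegree = m + 1) :
    (derivative f).natDegree = m := by
  have hf0 : f ≠ 0 := fun h => by simp [h] at hdeg
  have hc : (derivative f).coeff m ≠ 0 := by
    rw [coeff_derivative]
    have : f.coeff (m + 1) = f.leadingCoeff := by rw [leadingCoeff, hdeg]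
    rw [this]
    refine mul_ne_zero (leadingCoeff_ne_zero.mpr hf0) ?_
    exact Nat.cast_add_one_ne_zero m
  have hlt : (derivative f).natDegree < m + 1 := by
    have := natDegree_derivative_lt (p := f) (by omega)
    omega
  have hle : m ≤ (derivative f).natDegree := le_natDegree_of_ne_zero hc
  omega

lemma deriv_ne_zero {f : Polynomial ℂ} {m : ℕ} (hm : 1 ≤ m) (hdeg : f.natDegree = m + 1) :
    derivative f ≠ 0 := by
  intro h
  have := deriv_natDegree hdeg
  rw [h] at this
  simp at this
  omega

lemma bb_ne_zero {f : Polynomial ℂ} {m : ℕ} (hm : 1 ≤ m) (hdeg : f.natDegree = m + 1)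
    (i : Fin (m + 1)) : bb f m i ≠ 0 := by
  unfold bb
  split
  · exact pow_ne_zero _ X_ne_zero
  · exact deriv_ne_zero hm hdeg

lemma bb_natDegree {f : Polynomial ℂ} {m : ℕ} (hdeg : f.natDegree = m + 1)
    (i : Fin (m + 1)) : (bb f m i).natDegree = (i : ℕ) := by
  unfold bb
  split
  · exact natDegree_X_pow _
  · have : (i : ℕ) = m := by omega
    rw [deriv_natDegree hdeg, this]

lemma comp_f_ne_zero {f : Polynomial ℂ} {m : ℕ} (hdeg : f.natDegree = m + 1)
    {q : Polynomial ℂ} (hq : q ≠ 0) : q.comp f ≠ 0 := by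
  have hf : f.natDegree ≠ 0 := by omega
  intro h
  have := leadingCoeff_comp (p := q) (q := f) hf
  rw [h, leadingCoeff_zero] at this
  have hq' : q.leadingCoeff ≠ 0 := leadingCoeff_ne_zero.mpr hq
  have hf' : f.leadingCoeff ≠ 0 := leadingCoeff_ne_zero.mpr (fun h0 => hf (by simp [h0]))
  exact (mul_ne_zero hq' (pow_ne_zero _ hf')) this.symm

lemma term_ne_zero {f : Polynomial ℂ} {m : ℕ} (hm : 1 ≤ m) (hdeg : f.natDegree = m + 1)
    {q : Polynomial ℂ} (hq : q ≠ 0) (i : Fin (m + 1)) :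
    q.comp f * bb f m i ≠ 0 :=
  mul_ne_zero (comp_f_ne_zero hdeg hq) (bb_ne_zero hm hdeg i)

lemma term_natDegree {f : Polynomial ℂ} {m : ℕ} (hm : 1 ≤ m) (hdeg : f.natDegree = m + 1)
    {q : Polynomial ℂ} (hq : q ≠ 0) (i : Fin (m + 1)) :
    (q.comp f * bb f m i).natDegree = q.natDegree * (m + 1) + (i : ℕ) := by
  rw [natDegree_mul (comp_f_ne_zero hdeg hq)
    (bb_ne_zero hm hdeg i), natDegree_comp, hdeg, bb_natDegree hdeg]

/-- Injectivity of the representation. -/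
lemma rep_inj {f : Polynomial ℂ} {m : ℕ} (hm : 1 ≤ m) (hdeg : f.natDegree = m + 1)
    (g : Fin (m + 1) → Polynomial ℂ)
    (h : ∑ i, (g i).comp f * bb f m i = 0) : g = 0 := by
  by_contra hg
  -- the set of nonzero coordinates
  have hs : (Finset.univ.filter fun i => g i ≠ 0).Nonempty := by
    rw [Finset.filter_nonempty_iff]
    by_contra hh
    push_neg at hh
    exact hg (funext fun i => hh i (Finset.mem_univ i))
  obtain ⟨j, hj, hjmax⟩ := Finset.exists_max_image _
    (fun i => (g i).natDegree * (m + 1) + (i : ℕ)) hs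
  have hgj : g j ≠ 0 := (Finset.mem_filter.mp hj).2
  set D := (g j).natDegree * (m + 1) + (j : ℕ) with hD
  have hcoeff : (∑ i, (g i).comp f * bb f m i).coeff D =
      ((g j).comp f * bb f m j).coeff D := by
    rw [finset_sum_coeff]
    refine Finset.sum_eq_single j (fun i _ hij => ?_) (fun h => absurd (Finset.mem_univ j) h)
    by_cases hgi : g i = 0
    · simp [hgi]
    · refine coeff_eq_zero_of_natDegree_lt ?_
      rw [term_natDegree hm hdeg hgi]
      have hle : (g i).natDegree * (m + 1) + (i : ℕ) ≤ D :=
        hjmax i (Finset.mem_filter.mpr ⟨Finset.mem_univ i, hgi⟩)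
      have hmod : ∀ (x : ℕ) (k : Fin (m + 1)), (x * (m + 1) + (k : ℕ)) % (m + 1) = (k : ℕ) := by
        intro x k
        rw [add_comm, Nat.add_mul_mod_self_right, Nat.mod_eq_of_lt k.isLt]
      have hne : (g i).natDegree * (m + 1) + (i : ℕ) ≠ D := by
        intro he
        apply hij
        apply Fin.ext
        have h2 : ((g i).natDegree * (m + 1) + (i : ℕ)) % (m + 1) = D % (m + 1) := by rw [he]
        rw [hmod ((g i).natDegree) i, hD, hmod ((g j).natDegree) j] at h2
        exact h2
      omega
  have hDdeg : ((g j).comp f * bb f m j).natDegree = D := term_natDegree hm hdeg hgj j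
  have : ((g j).comp f * bb f m j).coeff D ≠ 0 := by
    rw [← hDdeg]
    exact (leadingCoeff_ne_zero).mpr (term_ne_zero hm hdeg hgj j)
  rw [h] at hcoeff
  simp at hcoeff
  exact this hcoeff.symm

lemma sum_pi_single_term {f : Polynomial ℂ} {m : ℕ} (i : Fin (m + 1)) (q : Polynomial ℂ) :
    ∑ k, ((Pi.single i q : Fin (m+1) → Polynomial ℂ) k).comp f * bb f m k
      = q.comp f * bb f m i := by
  refine Finset.sum_eq_single_of_mem i (Finset.mem_univ i) (fun k _ hki => ?_) |>.trans ?_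
  · rw [Pi.single_eq_of_ne hki]
    simp
  · rw [Pi.single_eq_same]

/-- Existence of the representation. -/
lemma rep_exists {f : Polynomial ℂ} {m : ℕ} (hm : 1 ≤ m) (hdeg : f.natDegree = m + 1)
    (p : Polynomial ℂ) : ∃ g : Fin (m + 1) → Polynomial ℂ,
      p = ∑ i, (g i).comp f * bb f m i := by
  have hf0 : f ≠ 0 := fun h => by simp [h] at hdeg
  have hflc : f.leadingCoeff ≠ 0 := leadingCoeff_ne_zero.mpr hf0
  obtain ⟨n, hn⟩ : ∃ n, p.natDegree ≤ n := ⟨p.natDegree, le_rfl⟩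
  induction n using Nat.strong_induction_on generalizing p with
  | _ n ih =>
    by_cases hp : p = 0
    · exact ⟨0, by simp [hp]⟩
    -- the matching single term
    set N := p.natDegree with hN
    set i : Fin (m + 1) := ⟨N % (m + 1), Nat.mod_lt _ (by omega)⟩ with hi
    set q0 := N / (m + 1) with hq0
    have hbblc : (bb f m i).leadingCoeff ≠ 0 :=
      leadingCoeff_ne_zero.mpr (bb_ne_zero hm hdeg i)
    set c : ℂ := p.leadingCoeff / (f.leadingCoeff ^ q0 * (bb f m i).leadingCoeff) with hc
    have hplc : p.leadingCoeff ≠ 0 := leadingCoeff_ne_zero.mpr hp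
    have hcne : c ≠ 0 := div_ne_zero hplc (mul_ne_zero (pow_ne_zero _ hflc) hbblc)
    set Q : Polynomial ℂ := C c * X ^ q0 with hQ
    have hQne : Q ≠ 0 := by
      rw [hQ]
      exact mul_ne_zero (fun h => hcne (by simpa using h)) (pow_ne_zero _ X_ne_zero)
    have hQdeg : Q.natDegree = q0 := by rw [hQ]; simp [natDegree_C_mul_X_pow _ _ hcne]
    set T : Polynomial ℂ := Q.comp f * bb f m i with hT
    have hTne : T ≠ 0 := term_ne_zero hm hdeg hQne i
    have hTdeg : T.natDegree = N := by
      rw [hT, term_natDegree hm hdeg hQne, hQdeg]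
      show q0 * (m + 1) + N % (m + 1) = N
      rw [mul_comm]
      exact Nat.div_add_mod N (m + 1)
    have hTlc : T.leadingCoeff = p.leadingCoeff := by
      have hf : f.natDegree ≠ 0 := by omega
      rw [hT, leadingCoeff_mul, leadingCoeff_comp hf, hQdeg]
      have hQlc : Q.leadingCoeff = c := by rw [hQ]; simp [leadingCoeff_C_mul_X_pow]
      rw [hQlc, hc]
      field_simp
    by_cases hpT : p - T = 0
    · refine ⟨Pi.single i Q, ?_⟩
      rw [sum_pi_single_term, ← hT, ← sub_eq_zero]
      exact hpT
    · have hdlt : (p - T).degree < p.degree := by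
        refine degree_sub_lt ?_ hp hTlc.symm
        rw [degree_eq_natDegree hp, degree_eq_natDegree hTne, hTdeg]
      have hndlt : (p - T).natDegree < N := by
        have := natDegree_lt_natDegree hpT hdlt
        omega
      obtain ⟨g', hg'⟩ := ih (p - T).natDegree (by omega) (p - T) le_rfl
      refine ⟨g' + Pi.single i Q, ?_⟩
      have : p = (p - T) + T := by ring
      rw [this, hg']
      have hsum : ∑ k, ((g' + (Pi.single i Q : Fin (m+1) → Polynomial ℂ)) k).comp f * bb f m k
          = (∑ k, (g' k).comp f * bb f m k)
            + ∑ k, ((Pi.single i Q : Fin (m+1) → Polynomial ℂ) k).comp f * bb f m k := by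
        rw [← Finset.sum_add_distrib]
        refine Finset.sum_congr rfl fun k _ => ?_
        simp [add_comp, add_mul]
      rw [hsum, sum_pi_single_term, ← hT]

/-- `ℂ[x] = ℂ[f]·1 ⊕ ⋯ ⊕ ℂ[f]·x^{d−2} ⊕ f'·ℂ[f]`: every `p ∈ ℂ[x]` is uniquely
`p = Σ_{i≤d−2} q_i(f)·x^i + q(f)·f'`. -/
theorem brieskorn_decomposition_one_var (f : Polynomial ℂ) (d : ℕ) (hd : 2 ≤ d)
    (hdeg : f.natDegree = d) (p : Polynomial ℂ) :
    ∃! qr : (Fin (d - 1) → Polynomial ℂ) × Polynomial ℂ,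
      p = (∑ i, (qr.1 i).comp f * X ^ (i : ℕ)) + (qr.2).comp f * derivative f := by
  obtain ⟨m, rfl⟩ : ∃ m, d = m + 1 := ⟨d - 1, by omega⟩
  have hm : 1 ≤ m := by omega
  change ∃! qr : (Fin m → Polynomial ℂ) × Polynomial ℂ,
      p = (∑ i, (qr.1 i).comp f * X ^ (i : ℕ)) + (qr.2).comp f * derivative f
  -- relate the pair form to the `Fin (m+1)` form
  have key : ∀ qr : (Fin m → Polynomial ℂ) × Polynomial ℂ,
      (∑ i, (qr.1 i).comp f * X ^ (i : ℕ)) + (qr.2).comp f * derivative f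
        = ∑ i : Fin (m + 1),
            ((fun j : Fin (m+1) => if h : (j : ℕ) < m then qr.1 ⟨j, h⟩ else qr.2) i).comp f
              * bb f m i := by
    intro qr
    rw [Fin.sum_univ_castSucc]
    congr 1
    · refine Finset.sum_congr rfl fun i _ => ?_
      have h1 : ((i.castSucc : Fin (m+1)) : ℕ) < m := i.isLt
      simp only [bb, dif_pos h1, if_pos h1]
      rfl
    · have h2 : ¬ ((Fin.last m : Fin (m+1)) : ℕ) < m := by simp
      simp only [bb, dif_neg h2, if_neg h2]
  obtain ⟨g, hg⟩ := rep_exists hm hdeg p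
  refine ⟨(fun i => g i.castSucc, g (Fin.last m)), ?_, ?_⟩
  · beta_reduce
    rw [key, hg]
    refine Finset.sum_congr rfl fun i _ => ?_
    congr 1
    by_cases h : (i : ℕ) < m
    · simp only [dif_pos h]
      have hi : (⟨(i : ℕ), h⟩ : Fin m).castSucc = i := Fin.ext rfl
      rw [hi]
    · simp only [dif_neg h]
      have hi : i = Fin.last m := Fin.ext (by
        have := i.isLt
        simp only [Fin.val_last]
        omega)
      rw [hi]
  · intro qr hqr
    -- uniqueness
    set g₁ : Fin (m+1) → Polynomial ℂ :=
      fun j => if h : (j : ℕ) < m then qr.1 ⟨j, h⟩ else qr.2 with hg₁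
    have hrep : p = ∑ i, (g₁ i).comp f * bb f m i := by rw [hqr, key]
    have hdiffsum : ∑ i, ((g₁ - g) i).comp f * bb f m i = 0 := by
      have : ∑ i, ((g₁ - g) i).comp f * bb f m i
          = (∑ i, (g₁ i).comp f * bb f m i) - ∑ i, (g i).comp f * bb f m i := by
        rw [← Finset.sum_sub_distrib]
        refine Finset.sum_congr rfl fun k _ => ?_
        simp [sub_comp, sub_mul]
      rw [this, ← hrep, ← hg, sub_self]
    have hzero : g₁ - g = 0 := rep_inj hm hdeg _ hdiffsum
    have hgeq : g₁ = g := by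
      funext j
      have := congrFun hzero j
      simpa [sub_eq_zero] using this
    refine Prod.ext ?_ ?_
    · funext i
      have := congrFun hgeq i.castSucc
      simp only [hg₁] at this
      rw [dif_pos (show ((i.castSucc : Fin (m+1)) : ℕ) < m from i.isLt)] at this
      simpa using this
    · have := congrFun hgeq (Fin.last m)
      rw [hg₁] at this
      simp only at this
      rw [dif_neg (show ¬ ((Fin.last m : Fin (m+1)) : ℕ) < m by simp)] at this
      simpa using this
end
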